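/- Let Γ be a finite group acting on a commutative pro-algebraic group G over an algebraically closed field k (in Serre's category 𝒫 with Serre's fundamental group functor π₁). Then π₁(G^Γ) = π₁(G)^Γ, i.e. the fundamental group of the fixed-point subgroup equals the Γ-invariants of the fundamental group. -/
import Mathlib


open CategoryTheory CategoryTheory.Limits

/- STATEMENT 7: (Serre) If a finite group `Γ` acts on a commutative pro-algebraic
group `G`, then `π₁(G^Γ) = π₁(G)^Γ`.  Abstractly: `π₁` is a left-exact additive
functor on Serre's abelian category `𝒫` of commutative pro-algebraic groups
(with values in the abelian category of profinite abelian groups), the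
fixed-point object `G^Γ` is the kernel of the 0-th coboundary map
`d : C⁰(Γ,G) → C¹(Γ,G)`, `d(g)_γ = γ·g − g`, and `π₁` of this kernel is the
corresponding kernel for the induced `Γ`-action on `π₁(G)`, i.e. `π₁(G)^Γ`. -/
theorem pi1_of_fixed_points
    {P : Type*} [Category P] [Abelian P]
    {A : Type*} [Category A] [Abelian A]
    (π₁ : P ⥤ A) [π₁.Additive] [PreservesFiniteLimits π₁]
    (Γ : Type) [Group Γ] [Fintype Γ]
    (G : P) (ρ : Γ →* Aut G) :
    Nonempty
      (π₁.obj (kernel (Pi.lift (fun γ : Γ => (ρ γ).hom - 𝟙 G))) ≅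
        kernel (Pi.lift (fun γ : Γ => π₁.map (ρ γ).hom - 𝟙 (π₁.obj G)))) := by
  set L : G ⟶ ∏ᶜ (fun _ : Γ => G) := Pi.lift (fun γ : Γ => (ρ γ).hom - 𝟙 G) with hL
  have e : π₁.map L ≫ piComparison π₁ (fun _ : Γ => G) =
      Pi.lift (fun γ : Γ => π₁.map (ρ γ).hom - 𝟙 (π₁.obj G)) := by
    ext γ
    simp [hL, ← π₁.map_comp, piComparison_comp_π]
  exact ⟨PreservesKernel.iso π₁ L ≪≫
    (kernelCompMono (π₁.map L) (piComparison π₁ (fun _ : Γ => G))).symm ≪≫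
    kernelIsoOfEq e⟩
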